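/- arXiv:2108.10277 — 3 statements merged into one kernel-verified Lean document; each statement's English description precedes it below -/
import Mathlib

section
/- For any N ≥ 1 and any real numbers h^1, ..., h^N, the Boltzmann selection function at index 0 dominates the Rosenbluth–Teller selection function at index 0: 1/(1 + Σ_{m=1}^N exp(h^m)) ≥ 1 - Σ_{m=1}^N exp(h^m)/(1 - min(1, exp(h^m)) + Σ_{l=1}^N exp(h^l)). -/
/-- Boltzmann vs Rosenbluth–Teller selection at index 0 (Peskun ordering). -/
theorem boltzmann_ge_rosenbluthTeller_at_zero (N : ℕ) (hN : 1 ≤ N) (h : Fin N → ℝ) :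
    1 / (1 + ∑ m : Fin N, Real.exp (h m)) ≥
      1 - ∑ m : Fin N, Real.exp (h m) /
        (1 - min 1 (Real.exp (h m)) + ∑ l : Fin N, Real.exp (h l)) := by
  set S : ℝ := ∑ m : Fin N, Real.exp (h m) with hSdef
  have hne : Nonempty (Fin N) := ⟨⟨0, hN⟩⟩
  have hS : 0 < S :=
    Finset.sum_pos (fun i _ => Real.exp_pos _) Finset.univ_nonempty
  have h1S : 0 < 1 + S := by linarith
  have key : S / (1 + S) ≤ ∑ m : Fin N, Real.exp (h m) /
      (1 - min 1 (Real.exp (h m)) + S) := by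
    rw [hSdef, Finset.sum_div]
    apply Finset.sum_le_sum
    intro m _
    have hden : 0 < 1 - min 1 (Real.exp (h m)) + S := by
      have : min 1 (Real.exp (h m)) ≤ 1 := min_le_left _ _
      linarith
    apply div_le_div_of_nonneg_left (Real.exp_pos _).le hden
    have : 0 ≤ min 1 (Real.exp (h m)) :=
      le_min zero_le_one (Real.exp_pos _).le
    linarith
  have : 1 - S / (1 + S) = 1 / (1 + S) := by field_simp; ring
  linarith
end

section
/- Let N ≥ 1, σ > 0, a ∈ ℝ, and let X = (X₁,...,X_N) be a Gaussian vector with mean -a·1_N and covariance σ²Σ where Σ has 1 on the diagonal and 1/2 off the diagonal. Then E[ (Σ_{i=1}^N exp(X_i)) / (1 + Σ_{i=1}^N exp(X_i)) ] ≥ (1 + exp(σ²/2 + a)/N)^{-1}. -/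
open MeasureTheory ProbabilityTheory

open scoped NNReal ENNReal

lemma aux_pdf_mul (t x : ℝ) :
    gaussianPDFReal 0 1 x * Real.exp (t * x)
      = Real.exp (t ^ 2 / 2) * gaussianPDFReal t 1 x := by
  simp only [gaussianPDFReal, NNReal.coe_one]
  rw [mul_assoc, ← Real.exp_add, mul_left_comm, ← Real.exp_add]
  congr 1
  ring_nf

lemma integrable_exp_gaussianReal' (t : ℝ) :
    Integrable (fun x => Real.exp (t * x)) (gaussianReal 0 1) := by
  rw [gaussianReal_of_var_ne_zero 0 one_ne_zero,
    integrable_withDensity_iff_integrable_smul' (measurable_gaussianPDF 0 1)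
      (ae_of_all _ fun x => ENNReal.ofReal_lt_top)]
  have h : (fun x => (gaussianPDF 0 1 x).toReal • Real.exp (t * x))
      = fun x => Real.exp (t ^ 2 / 2) * gaussianPDFReal t 1 x := by
    ext x
    rw [smul_eq_mul, gaussianPDF_def,
      ENNReal.toReal_ofReal (gaussianPDFReal_nonneg 0 1 x), aux_pdf_mul]
  rw [h]
  exact (integrable_gaussianPDFReal t 1).const_mul _

lemma integral_exp_gaussianReal' (t : ℝ) :
    ∫ x, Real.exp (t * x) ∂(gaussianReal 0 1) = Real.exp (t ^ 2 / 2) := by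
  rw [gaussianReal_of_var_ne_zero 0 one_ne_zero]
  have hd : (volume : Measure ℝ).withDensity (gaussianPDF 0 1)
      = (volume : Measure ℝ).withDensity fun x =>
          ((Real.toNNReal (gaussianPDFReal 0 1 x) : ℝ≥0) : ℝ≥0∞) := rfl
  rw [hd, integral_withDensity_eq_integral_smul
    ((measurable_gaussianPDFReal 0 1).real_toNNReal)]
  calc ∫ x, Real.toNNReal (gaussianPDFReal 0 1 x) • Real.exp (t * x)
      = ∫ x, gaussianPDFReal 0 1 x * Real.exp (t * x) := by
        congr 1; ext x
        rw [NNReal.smul_def, smul_eq_mul, Real.coe_toNNReal _ (gaussianPDFReal_nonneg 0 1 x)]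
    _ = ∫ x, Real.exp (t ^ 2 / 2) * gaussianPDFReal t 1 x := by simp_rw [aux_pdf_mul]
    _ = Real.exp (t ^ 2 / 2) := by
        rw [integral_const_mul, integral_gaussianPDFReal_eq_one t one_ne_zero, mul_one]

lemma map_eval_pi {N : ℕ} (i : Fin N) :
    (Measure.pi fun _ : Fin N => gaussianReal 0 1).map (Function.eval i)
      = gaussianReal 0 1 := by
  classical
  refine Measure.ext fun s hs => ?_
  rw [Measure.map_apply (measurable_pi_apply i) hs]
  have h : Function.eval i ⁻¹' s
      = Set.pi Set.univ (Function.update (fun _ : Fin N => (Set.univ : Set ℝ)) i s) :=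
    Set.eval_preimage
  rw [h, Measure.pi_pi]
  rw [Finset.prod_eq_single i (fun j _ hj => by simp [Function.update_of_ne hj])
    (fun hi => absurd (Finset.mem_univ i) hi)]
  simp

lemma integrable_exp_eval' {N : ℕ} (t : ℝ) (i : Fin N) :
    Integrable (fun z : Fin N → ℝ => Real.exp (t * z i))
      (Measure.pi fun _ : Fin N => gaussianReal 0 1) := by
  have hmeas : AEStronglyMeasurable (fun x : ℝ => Real.exp (t * x))
      ((Measure.pi fun _ : Fin N => gaussianReal 0 1).map (Function.eval i)) :=
    (Real.continuous_exp.comp (continuous_const.mul continuous_id)).aestronglyMeasurable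
  exact (integrable_map_measure hmeas (measurable_pi_apply i).aemeasurable).mp
    (by rw [map_eval_pi i]; exact integrable_exp_gaussianReal' t)

lemma integral_exp_eval' {N : ℕ} (t : ℝ) (i : Fin N) :
    ∫ z, Real.exp (t * z i) ∂(Measure.pi fun _ : Fin N => gaussianReal 0 1)
      = Real.exp (t ^ 2 / 2) := by
  have hmeas : AEStronglyMeasurable (fun x : ℝ => Real.exp (t * x))
      ((Measure.pi fun _ : Fin N => gaussianReal 0 1).map (Function.eval i)) :=
    (Real.continuous_exp.comp (continuous_const.mul continuous_id)).aestronglyMeasurable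
  have h2 : ∫ z : Fin N → ℝ, Real.exp (t * z i) ∂(Measure.pi fun _ : Fin N => gaussianReal 0 1)
      = ∫ x, Real.exp (t * x) ∂((Measure.pi fun _ : Fin N => gaussianReal 0 1).map (Function.eval i)) :=
    (integral_map (μ := Measure.pi fun _ : Fin N => gaussianReal 0 1)
      (φ := Function.eval i) (f := fun x : ℝ => Real.exp (t * x))
      (measurable_pi_apply i).aemeasurable hmeas).symm
  rw [h2, map_eval_pi, integral_exp_gaussianReal']

lemma convexOn_one_add_inv : ConvexOn ℝ (Set.Ici (0:ℝ)) (fun x : ℝ => (1 + x)⁻¹) := by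
  have h : ConvexOn ℝ (Set.Ioi (0:ℝ)) (fun x : ℝ => x ^ (-1 : ℤ)) :=
    (strictConvexOn_zpow (by norm_num) (by norm_num)).convexOn
  have h2 := h.comp_affineMap (AffineMap.const ℝ ℝ (1:ℝ) + AffineMap.id ℝ ℝ)
  have hfun : ((fun x : ℝ => x ^ (-1 : ℤ)) ∘ ⇑(AffineMap.const ℝ ℝ (1:ℝ) + AffineMap.id ℝ ℝ))
      = fun x : ℝ => (1 + x)⁻¹ := by
    ext x
    simp [zpow_neg, AffineMap.coe_add, AffineMap.coe_const, AffineMap.coe_id]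
  rw [hfun] at h2
  refine h2.subset (fun x hx => ?_) (convex_Ici 0)
  simp only [Set.mem_preimage, Set.mem_Ici, Set.mem_Ioi, AffineMap.coe_add,
    AffineMap.coe_const, AffineMap.coe_id, Pi.add_apply, Function.const_apply, id_eq] at hx ⊢
  linarith


/-- Lower bound on the expected Boltzmann acceptance probability for an exchangeable
Gaussian vector `X ~ N(-a·1_N, σ²Σ)` with `Σ = ½(I_N + 1_N 1_Nᵀ)`, realised as
`X_i = -a + σ (W + Z_i)/√2` with `W, Z₁, …, Z_N` i.i.d. standard normal. -/
theorem expected_boltzmann_lower_bound (N : ℕ) (hN : 1 ≤ N) (σ a : ℝ) (hσ : 0 < σ) :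
    (1 + Real.exp (σ ^ 2 / 2 + a) / N)⁻¹ ≤
      ∫ p : ℝ × (Fin N → ℝ),
        (∑ i : Fin N, Real.exp (-a + σ * (p.1 + p.2 i) / Real.sqrt 2)) /
          (1 + ∑ i : Fin N, Real.exp (-a + σ * (p.1 + p.2 i) / Real.sqrt 2))
        ∂((gaussianReal 0 1).prod (Measure.pi fun _ : Fin N => gaussianReal 0 1)) := by
  classical
  haveI : Nonempty (Fin N) := ⟨⟨0, hN⟩⟩
  set ν : Measure (Fin N → ℝ) := Measure.pi fun _ : Fin N => gaussianReal 0 1 with hν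
  set μ : Measure (ℝ × (Fin N → ℝ)) := (gaussianReal 0 1).prod ν with hμ
  haveI : IsProbabilityMeasure μ := by rw [hμ]; infer_instance
  have hsqrt2 : (Real.sqrt 2) ^ 2 = 2 := Real.sq_sqrt (by norm_num)
  have hsqrt2pos : (0:ℝ) < Real.sqrt 2 := Real.sqrt_pos.mpr (by norm_num)
  set c : ℝ := -(σ / Real.sqrt 2) with hc
  have hc2 : c ^ 2 = σ ^ 2 / 2 := by
    rw [hc, neg_pow, div_pow, hsqrt2]; ring
  set S : ℝ × (Fin N → ℝ) → ℝ :=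
    fun p => ∑ i : Fin N, Real.exp (-a + σ * (p.1 + p.2 i) / Real.sqrt 2) with hS
  set T : ℝ × (Fin N → ℝ) → ℝ :=
    fun p => ∑ i : Fin N, Real.exp (-(-a + σ * (p.1 + p.2 i) / Real.sqrt 2)) with hT
  have hNpos : (0:ℝ) < N := by exact_mod_cast hN
  have hS_pos : ∀ p, 0 < S p := fun p =>
    Finset.sum_pos (fun i _ => Real.exp_pos _) Finset.univ_nonempty
  have hT_nonneg : ∀ p, 0 ≤ T p := fun p =>
    Finset.sum_nonneg fun i _ => (Real.exp_pos _).le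
  -- Cauchy-Schwarz / AM-HM
  have hCS : ∀ p, (N : ℝ) ^ 2 ≤ S p * T p := by
    intro p
    have h := Finset.sum_mul_sq_le_sq_mul_sq Finset.univ
      (fun i : Fin N => Real.exp ((-a + σ * (p.1 + p.2 i) / Real.sqrt 2) / 2))
      (fun i : Fin N => Real.exp (-(-a + σ * (p.1 + p.2 i) / Real.sqrt 2) / 2))
    have e1 : ∀ x : ℝ, Real.exp (x / 2) * Real.exp (-x / 2) = 1 := by
      intro x; rw [← Real.exp_add, show x / 2 + -x / 2 = 0 by ring, Real.exp_zero]
    have e2 : ∀ x : ℝ, Real.exp (x / 2) ^ 2 = Real.exp x := by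
      intro x; rw [sq, ← Real.exp_add, show x / 2 + x / 2 = x by ring]
    simp only [e1, e2, Finset.sum_const, Finset.card_univ, Fintype.card_fin,
      nsmul_eq_mul, mul_one] at h
    exact h
  have hinv : ∀ p, (S p)⁻¹ ≤ ((N : ℝ) ^ 2)⁻¹ * T p := by
    intro p
    have hN2 : (0:ℝ) < (N : ℝ) ^ 2 := by positivity
    rw [inv_eq_one_div, inv_mul_eq_div, div_le_div_iff₀ (hS_pos p) hN2]
    nlinarith [hCS p]
  -- integrability and integral of T
  have hT_eq : T = fun p : ℝ × (Fin N → ℝ) =>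
      ∑ i : Fin N, Real.exp a * (Real.exp (c * p.1) * Real.exp (c * p.2 i)) := by
    funext p
    refine Finset.sum_congr rfl fun i _ => ?_
    rw [← Real.exp_add, ← Real.exp_add]
    congr 1
    rw [hc]
    have h2 : Real.sqrt 2 ≠ 0 := hsqrt2pos.ne'
    field_simp
    linear_combination
  have hterm_int : ∀ i : Fin N, Integrable
      (fun p : ℝ × (Fin N → ℝ) => Real.exp a * (Real.exp (c * p.1) * Real.exp (c * p.2 i))) μ := by
    intro i
    exact ((integrable_exp_gaussianReal' c).mul_prod (integrable_exp_eval' c i)).const_mul _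
  have hT_int : Integrable T μ := by
    rw [hT_eq]
    exact integrable_finset_sum _ fun i _ => hterm_int i
  have hT_integral : ∫ p, T p ∂μ = N * Real.exp (σ ^ 2 / 2 + a) := by
    rw [hT_eq, integral_finset_sum _ fun i _ => hterm_int i]
    have hterm : ∀ i : Fin N,
        ∫ p, Real.exp a * (Real.exp (c * p.1) * Real.exp (c * p.2 i)) ∂μ
          = Real.exp (σ ^ 2 / 2 + a) := by
      intro i
      rw [hμ, integral_const_mul,
        integral_prod_mul (f := fun x : ℝ => Real.exp (c * x))
          (g := fun z : Fin N → ℝ => Real.exp (c * z i)),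
        integral_exp_gaussianReal', integral_exp_eval', ← Real.exp_add, ← Real.exp_add, hc2]
      congr 1
      ring
    simp_rw [hterm]
    rw [Finset.sum_const, Finset.card_univ, Fintype.card_fin, nsmul_eq_mul]
  -- the function f = S⁻¹
  have hS_cont : Continuous S := by
    rw [hS]
    exact continuous_finset_sum _ fun i _ => Real.continuous_exp.comp (by fun_prop)
  have hf_cont : Continuous fun p => (S p)⁻¹ :=
    hS_cont.inv₀ fun p => (hS_pos p).ne'
  have hf_int : Integrable (fun p => (S p)⁻¹) μ := by
    refine Integrable.mono' (hT_int.const_mul ((N : ℝ) ^ 2)⁻¹)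
      hf_cont.aestronglyMeasurable (ae_of_all _ fun p => ?_)
    rw [Real.norm_eq_abs, abs_of_nonneg (inv_nonneg.2 (hS_pos p).le)]
    exact hinv p
  have hf_nonneg : 0 ≤ ∫ p, (S p)⁻¹ ∂μ :=
    integral_nonneg fun p => inv_nonneg.2 (hS_pos p).le
  have hf_le : ∫ p, (S p)⁻¹ ∂μ ≤ Real.exp (σ ^ 2 / 2 + a) / N := by
    calc ∫ p, (S p)⁻¹ ∂μ ≤ ∫ p, ((N : ℝ) ^ 2)⁻¹ * T p ∂μ :=
          integral_mono hf_int (hT_int.const_mul _) hinv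
      _ = ((N : ℝ) ^ 2)⁻¹ * (N * Real.exp (σ ^ 2 / 2 + a)) := by
          rw [integral_const_mul, hT_integral]
      _ = Real.exp (σ ^ 2 / 2 + a) / N := by
          field_simp
  -- Jensen's inequality
  have hg_contOn : ContinuousOn (fun x : ℝ => (1 + x)⁻¹) (Set.Ici 0) := by
    refine ContinuousOn.inv₀ (continuous_const.add continuous_id).continuousOn fun x hx => ?_
    have : (0:ℝ) ≤ x := hx
    positivity
  have hgf_int : Integrable ((fun x : ℝ => (1 + x)⁻¹) ∘ fun p => (S p)⁻¹) μ := by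
    refine Integrable.mono' (integrable_const (1:ℝ))
      ((continuous_const.add hf_cont).inv₀ fun p => by show (1:ℝ) + (S p)⁻¹ ≠ 0; positivity).aestronglyMeasurable
      (ae_of_all _ fun p => ?_)
    have h1 : (0:ℝ) < 1 + (S p)⁻¹ := by positivity
    simp only [Function.comp_apply]
    rw [Real.norm_eq_abs, abs_of_nonneg (inv_nonneg.2 h1.le)]
    rw [inv_le_one_iff₀]
    right
    have := inv_nonneg.2 (hS_pos p).le
    linarith
  have hjen := convexOn_one_add_inv.map_integral_le hg_contOn isClosed_Ici
    (ae_of_all _ fun p => Set.mem_Ici.2 (inv_nonneg.2 (hS_pos p).le)) hf_int hgf_int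
  -- conclusion
  have hfinal : ∫ p, (1 + (S p)⁻¹)⁻¹ ∂μ = ∫ p, S p / (1 + S p) ∂μ := by
    refine integral_congr_ae (ae_of_all _ fun p => ?_)
    have hs := (hS_pos p).ne'
    have h1 : 1 + (S p)⁻¹ = (1 + S p) / S p := by
      rw [add_div, div_self hs]; ring
    show (1 + (S p)⁻¹)⁻¹ = S p / (1 + S p)
    rw [h1, inv_div]
  calc (1 + Real.exp (σ ^ 2 / 2 + a) / N)⁻¹
      ≤ (1 + ∫ p, (S p)⁻¹ ∂μ)⁻¹ := by
        apply inv_anti₀ (by positivity)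
        linarith
    _ ≤ ∫ p, (1 + (S p)⁻¹)⁻¹ ∂μ := hjen
    _ = ∫ p, S p / (1 + S p) ∂μ := hfinal
end

section
/- Let N ≥ 1, Σ := (1/2)(I_N + 1_N 1_N^T), ℓ > 0 and D ≥ 1. For z^0, ..., z^N ∈ ℝ, define z^{-n} := (z^0,...,z^{n-1},z^{n+1},...,z^N) ∈ ℝ^N. Then the Gaussian proposal density is exchangeable-symmetric: for all m, n ∈ {0,...,N}, N(z^{-m}; z^m·1_N, (ℓ/D)Σ) = N(z^{-n}; z^n·1_N, (ℓ/D)Σ). -/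
open MeasureTheory Matrix

/-- Multivariate Gaussian density with mean `μ` and covariance matrix `C`. -/
noncomputable def gaussN {N : ℕ} (μ : Fin N → ℝ) (C : Matrix (Fin N) (Fin N) ℝ)
    (x : Fin N → ℝ) : ℝ :=
  (Real.sqrt ((2 * Real.pi) ^ N * C.det))⁻¹ *
    Real.exp (-(1 / 2) * ((fun i => x i - μ i) ⬝ᵥ (C⁻¹ *ᵥ fun i => x i - μ i)))

lemma inv_one_add_allones (N : ℕ) (c : ℝ) (hc : c ≠ 0) :
    (c • ((1 : Matrix (Fin N) (Fin N) ℝ) + Matrix.of fun _ _ => (1 : ℝ)))⁻¹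
      = c⁻¹ • ((1 : Matrix (Fin N) (Fin N) ℝ)
          - ((N : ℝ) + 1)⁻¹ • Matrix.of fun _ _ => (1 : ℝ)) := by
  apply Matrix.inv_eq_right_inv
  have hN1 : ((N : ℝ) + 1) ≠ 0 := by positivity
  ext i j
  simp only [Matrix.mul_apply, Matrix.smul_apply, Matrix.add_apply, Matrix.sub_apply,
    Matrix.one_apply, Matrix.of_apply, smul_eq_mul]
  have step : ∀ x : Fin N, c * ((if i = x then (1:ℝ) else 0) + 1) *
      (c⁻¹ * ((if x = j then (1:ℝ) else 0) - ((N:ℝ) + 1)⁻¹ * 1)) =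
      (if i = x then (1:ℝ) else 0) * (if x = j then (1:ℝ) else 0)
        + (if x = j then (1:ℝ) else 0)
        - ((if i = x then (1:ℝ) else 0) * ((N:ℝ) + 1)⁻¹ + ((N:ℝ) + 1)⁻¹) := by
    intro x
    split_ifs <;> field_simp <;> ring
  rw [Finset.sum_congr rfl fun x _ => step x]
  rw [Finset.sum_sub_distrib, Finset.sum_add_distrib, Finset.sum_add_distrib]
  simp only [Finset.sum_ite_eq, Finset.sum_ite_eq', Finset.mem_univ, if_true,
    Finset.sum_const, Finset.card_univ, Fintype.card_fin, nsmul_eq_mul]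
  by_cases h : i = j <;> simp [h] <;> field_simp <;> ring

/-- Exchangeable symmetry of the random-walk proposal density: for points `z⁰,…,zᴺ`,
the density of the remaining points given centre `zᵐ` does not depend on `m`. -/
theorem proposal_density_symmetric (N : ℕ) (hN : 1 ≤ N) (D : ℕ) (hD : 1 ≤ D)
    (ℓ : ℝ) (hl : 0 < ℓ) (z : Fin (N + 1) → ℝ) (m n : Fin (N + 1)) :
    gaussN (fun _ => z m)
        ((ℓ / D) • ((1 / 2 : ℝ) •
          ((1 : Matrix (Fin N) (Fin N) ℝ) + Matrix.of fun _ _ => (1 : ℝ))))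
        (m.removeNth z) =
      gaussN (fun _ => z n)
        ((ℓ / D) • ((1 / 2 : ℝ) •
          ((1 : Matrix (Fin N) (Fin N) ℝ) + Matrix.of fun _ _ => (1 : ℝ))))
        (n.removeNth z) := by
  have hD0 : (0:ℝ) < (D:ℝ) := Nat.cast_pos.mpr hD
  have hcpos : (0:ℝ) < ℓ / D * (1/2) := by positivity
  set c : ℝ := ℓ / D * (1/2) with hc_def
  have hc : c ≠ 0 := ne_of_gt hcpos
  have hN1 : ((N : ℝ) + 1) ≠ 0 := by positivity
  unfold gaussN
  simp only [smul_smul, ← hc_def]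
  rw [inv_one_add_allones N c hc]
  have key : ∀ p : Fin (N + 1),
      ((fun i => p.removeNth z i - z p) ⬝ᵥ
        ((c⁻¹ • ((1 : Matrix (Fin N) (Fin N) ℝ)
            - ((N : ℝ) + 1)⁻¹ • Matrix.of fun _ _ => (1 : ℝ))) *ᵥ
          fun i => p.removeNth z i - z p))
      = c⁻¹ * ((∑ k, (z k) ^ 2) - ((N : ℝ) + 1)⁻¹ * (∑ k, z k) ^ 2) := by
    intro p
    have hmv : ((c⁻¹ • ((1 : Matrix (Fin N) (Fin N) ℝ)
            - ((N : ℝ) + 1)⁻¹ • Matrix.of fun _ _ => (1 : ℝ))) *ᵥ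
          fun i => p.removeNth z i - z p)
        = fun i => c⁻¹ * ((z (p.succAbove i) - z p)
            - ((N : ℝ) + 1)⁻¹ * ∑ j : Fin N, (z (p.succAbove j) - z p)) := by
      ext i
      simp only [Matrix.mulVec, dotProduct, Matrix.smul_apply, Matrix.sub_apply,
        Matrix.one_apply, Matrix.of_apply, smul_eq_mul, Fin.removeNth]
      rw [Finset.sum_congr rfl (fun x _ => by ring :
        ∀ x ∈ Finset.univ, c⁻¹ * ((if i = x then (1:ℝ) else 0)
            - ((N:ℝ) + 1)⁻¹ * 1) * (z (p.succAbove x) - z p)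
          = (if i = x then (1:ℝ) else 0) * (c⁻¹ * (z (p.succAbove x) - z p))
            - c⁻¹ * ((N:ℝ) + 1)⁻¹ * (z (p.succAbove x) - z p))]
      rw [Finset.sum_sub_distrib]
      simp only [ite_mul, one_mul, zero_mul, Finset.sum_ite_eq, Finset.mem_univ, if_true,
        ← Finset.mul_sum]
      ring
    rw [hmv]
    simp only [dotProduct, Fin.removeNth]
    have hB : ∑ j : Fin N, (z (p.succAbove j) - z p) = (∑ k, z k) - ((N:ℝ) + 1) * z p := by
      have h1 := Fin.sum_univ_succAbove (fun k => z k - z p) p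
      have h2 : ∑ k : Fin (N+1), (z k - z p) = (∑ k, z k) - ((N:ℝ) + 1) * z p := by
        rw [Finset.sum_sub_distrib, Finset.sum_const, Finset.card_univ, Fintype.card_fin,
          nsmul_eq_mul]
        push_cast
        ring
      simp only [sub_self] at h1
      linarith [h1, h2]
    have hA : ∑ j : Fin N, (z (p.succAbove j) - z p) ^ 2
        = (∑ k, (z k) ^ 2) - 2 * z p * (∑ k, z k) + ((N:ℝ) + 1) * z p ^ 2 := by
      have h1 := Fin.sum_univ_succAbove (fun k => (z k - z p) ^ 2) p
      have h2 : ∑ k : Fin (N+1), (z k - z p) ^ 2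
          = (∑ k, (z k) ^ 2) - 2 * z p * (∑ k, z k) + ((N:ℝ) + 1) * z p ^ 2 := by
        rw [Finset.sum_congr rfl (fun k _ => by ring :
          ∀ k ∈ Finset.univ, (z k - z p) ^ 2 = z k ^ 2 - 2 * z p * z k + z p ^ 2)]
        rw [Finset.sum_add_distrib, Finset.sum_sub_distrib, Finset.sum_const,
          Finset.card_univ, Fintype.card_fin, nsmul_eq_mul, ← Finset.mul_sum]
        push_cast
        ring
      simp only [sub_self] at h1
      rw [h2] at h1
      have : (0:ℝ) ^ 2 = 0 := by norm_num
      rw [this, zero_add] at h1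
      linarith [h1]
    rw [hB]
    rw [Finset.sum_congr rfl (fun j _ => by ring :
      ∀ j ∈ Finset.univ, (z (p.succAbove j) - z p) *
          (c⁻¹ * ((z (p.succAbove j) - z p)
            - ((N:ℝ) + 1)⁻¹ * ((∑ k, z k) - ((N:ℝ) + 1) * z p)))
        = c⁻¹ * (z (p.succAbove j) - z p) ^ 2
          - (c⁻¹ * ((N:ℝ) + 1)⁻¹ * ((∑ k, z k) - ((N:ℝ) + 1) * z p))
              * (z (p.succAbove j) - z p))]
    rw [Finset.sum_sub_distrib, ← Finset.mul_sum, ← Finset.mul_sum, hA, hB]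
    field_simp
    ring
  rw [key m, key n]
end
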